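/- Let changes : ℕ → Option (Bool × V) record at each time either no change or a change event carrying a bit-flip flag and a value. Define val : ℕ → V as the value carried by the most recent change (or the initial value v₀). If a change at time t' carries value v' and flips the bit, and the next bit-flipping change occurs at time t > t' with no non-flipping changes in (t', t), and the change at t was produced by a process that read val at some time r ∈ (t', t) and aborted whenever the read value equalled its input v, then v ≠ v'. (A freshly moved value cannot be immediately re-installed.) -/

import Mathlib

/-- The value carried by the most recent change at a time `≤ t`, or `v₀` if
there has been no change. -/
def valAt {V : Type*} (v₀ : V) (changes : ℕ → Option (Bool × V)) : ℕ → V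
  | 0 => match changes 0 with
    | some (_, v) => v
    | none => v₀
  | (t + 1) => match changes (t + 1) with
    | some (_, v) => v
    | none => valAt v₀ changes t

/-- A freshly moved value cannot be immediately re-installed: if a bit-flipping
change at `t'` carries `v'`, the next bit-flipping change at `t > t'` carries
`v` with no changes in `(t', t)`, and the change at `t` was produced by a
process that read the current value at some `r ∈ (t', t)` and would have
aborted (making no change at `t`) had the read value equalled its input `v`,
then `v ≠ v'`. -/
theorem stmt7 {V : Type*} [DecidableEq V] (v₀ : V) (changes : ℕ → Option (Bool × V))
    (t' t r : ℕ) (v v' : V)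
    (hmove : changes t' = some (true, v'))
    (hinstall : changes t = some (true, v))
    (htt : t' < t) (hr1 : t' < r) (hr2 : r < t)
    (hnone : ∀ u, t' < u → u < t → changes u = none)
    (habort : valAt v₀ changes r = v → changes t = none) :
    v ≠ v' := by
  have key : ∀ u, t' ≤ u → u < t → valAt v₀ changes u = v' := by
    intro u hu
    induction u, hu using Nat.le_induction with
    | base =>
      intro _
      cases t' with
      | zero => simp [valAt, hmove]
      | succ n => simp [valAt, hmove]
    | succ n hn ih =>
      intro hlt
      have : changes (n + 1) = none := hnone (n + 1) (Nat.lt_succ_of_le hn) hlt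
      simp [valAt, this, ih (Nat.lt_of_succ_lt hlt)]
  intro hvv
  have := habort (by rw [key r (le_of_lt hr1) hr2, hvv])
  rw [this] at hinstall
  exact Option.some_ne_none _ hinstall.symm
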